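/- arXiv:0905.0417 — 2 statements merged into one kernel-verified Lean document; each statement's English description precedes it below -/
import Mathlib

section
/- Let q ≥ 2, n ≥ 1, t ≥ 1, and let C : [M] → Q^n be a code whose minimum distance satisfies min_{u ≠ v} dist(C(u), C(v)) > n(1 − 1/t²). Then C is t-TA under minimum-distance decoding: for every nonempty coalition U ⊆ [M] with |U| ≤ t and every y ∈ E(C(U)) (the envelope of the fingerprints of the users in U), every user u' ∈ [M] that minimizes dist(C(u'), y) over all users belongs to U. -/
/-- A one-level code with minimum distance `> n(1 − 1/t²)`
(expressed over ℕ as `n·(t² − 1) < t²·dist`) is `t`-TA under minimum-distance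
decoding: every user minimizing the distance to a forgery created by a coalition
of size at most `t` belongs to the coalition. -/
theorem stmt2 (q n t M : ℕ) (hq : 2 ≤ q) (hn : 1 ≤ n) (ht : 1 ≤ t)
    (C : Fin M → Fin n → Fin q)
    (hdist : ∀ u v : Fin M, u ≠ v →
      n * (t ^ 2 - 1) < t ^ 2 * hammingDist (C u) (C v))
    (U : Finset (Fin M)) (hUne : U.Nonempty) (hUcard : U.card ≤ t)
    (y : Fin n → Fin q) (henv : ∀ l, ∃ u ∈ U, y l = C u l)
    (u' : Fin M)
    (hmin : ∀ v : Fin M, hammingDist (C u') y ≤ hammingDist (C v) y) :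
    u' ∈ U := by
  classical
  by_contra hu'
  -- agreement counts
  set A : (Fin n → Fin q) → (Fin n → Fin q) → ℕ :=
    fun a b => (Finset.univ.filter (fun l => a l = b l)).card with hA
  have ht2 : 1 ≤ t ^ 2 := Nat.one_le_pow _ _ ht
  have hsum : ∀ a b : Fin n → Fin q, A a b + hammingDist a b = n := by
    intro a b
    have := Finset.card_filter_add_card_filter_not
      (s := (Finset.univ : Finset (Fin n))) (p := fun l => a l = b l)
    simpa [hA, hammingDist] using this
  -- pigeonhole: some coalition member agrees with y a lot
  have hcover : (Finset.univ : Finset (Fin n)) ⊆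
      U.biUnion (fun u => Finset.univ.filter (fun l => C u l = y l)) := by
    intro l _
    obtain ⟨u, hu, hy⟩ := henv l
    exact Finset.mem_biUnion.2 ⟨u, hu, by simp [hy.symm]⟩
  have hsum_ge : n ≤ ∑ u ∈ U, A (C u) y := by
    calc n = (Finset.univ : Finset (Fin n)).card := by simp
    _ ≤ (U.biUnion (fun u => Finset.univ.filter (fun l => C u l = y l))).card :=
        Finset.card_le_card hcover
    _ ≤ ∑ u ∈ U, A (C u) y := Finset.card_biUnion_le
  obtain ⟨u, huU, hmax⟩ := U.exists_max_image (fun u => A (C u) y) hUne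
  have hUbound : ∑ v ∈ U, A (C v) y ≤ U.card * A (C u) y := by
    simpa using Finset.sum_le_card_nsmul U _ (A (C u) y) (fun v hv => hmax v hv)
  have hgood : n ≤ t * A (C u) y :=
    le_trans (le_trans hsum_ge hUbound)
      (Nat.mul_le_mul_right _ hUcard)
  -- u' agrees little with each coalition member
  have hlittle : ∀ v ∈ U, t ^ 2 * A (C u') (C v) < n := by
    intro v hv
    have hne : u' ≠ v := fun h => hu' (h ▸ hv)
    have hd := hdist u' v hne
    have h1 := hsum (C u') (C v)
    have h2 : n * (t ^ 2 - 1) + n = t ^ 2 * n := by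
      rw [← Nat.mul_succ, Nat.succ_eq_add_one, Nat.sub_add_cancel ht2, Nat.mul_comm]
    have h3 : t ^ 2 * A (C u') (C v) + t ^ 2 * hammingDist (C u') (C v)
        = t ^ 2 * n := by rw [← Nat.mul_add, h1]
    omega
  -- u' agrees with y at most the sum of agreements with members
  have hsub : (Finset.univ.filter (fun l => C u' l = y l)) ⊆
      U.biUnion (fun v => Finset.univ.filter (fun l => C u' l = C v l)) := by
    intro l hl
    obtain ⟨v, hv, hy⟩ := henv l
    have := (Finset.mem_filter.1 hl).2
    exact Finset.mem_biUnion.2 ⟨v, hv, by simp [this, ← hy]⟩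
  have hAle : A (C u') y ≤ ∑ v ∈ U, A (C u') (C v) :=
    le_trans (Finset.card_le_card hsub) Finset.card_biUnion_le
  have hlt : t ^ 2 * A (C u') y < U.card * n := by
    calc t ^ 2 * A (C u') y ≤ ∑ v ∈ U, t ^ 2 * A (C u') (C v) := by
          rw [← Finset.mul_sum]; exact Nat.mul_le_mul_left _ hAle
    _ < ∑ v ∈ U, n := Finset.sum_lt_sum_of_nonempty hUne hlittle
    _ = U.card * n := by rw [Finset.sum_const, smul_eq_mul]
  have hbad : t * A (C u') y < n := by
    have h4 : t * (t * A (C u') y) < t * n := by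
      have : t ^ 2 * A (C u') y < t * n :=
        lt_of_lt_of_le hlt (Nat.mul_le_mul_right _ hUcard)
      calc t * (t * A (C u') y) = t ^ 2 * A (C u') y := by ring
      _ < t * n := this
    exact Nat.lt_of_mul_lt_mul_left h4
  -- conclude
  have hAlt : A (C u') y < A (C u) y :=
    Nat.lt_of_mul_lt_mul_left (a := t) (lt_of_lt_of_le hbad hgood)
  have h5 := hsum (C u') y
  have h6 := hsum (C u) y
  have : hammingDist (C u) y < hammingDist (C u') y := by omega
  exact absurd (hmin u) (by omega)
end

section
/- Let q ≥ 2, n ≥ 1 and t_1 > t_2 ≥ 1. Let C : [M_1] × [M_2] → Q^n be a two-level code with d_1(C) > n(1 − 1/t_1²) and d_2(C) > n(1 − 1/t_2²). Then C is (t_1,t_2)-TA under minimum-distance decoding, i.e.: (a) for every nonempty coalition U ⊆ [M_1] × [M_2] with |U| ≤ t_2 and every y ∈ E(C(U)), every user u' minimizing dist(C(u'), y) over all users belongs to U; and (b) for every nonempty coalition U with |U| ≤ t_1 and every y ∈ E(C(U)), every user u' minimizing dist(C(u'), y) over all users has its group index G(u') in G(U) = {u_1 : (u_1,u_2) ∈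 U}. -/
open Finset

/-- agreement + distance = n for functions on `Fin n` -/
lemma agree_add_dist {q n : ℕ} (x y : Fin n → Fin q) :
    #{l | x l = y l} + hammingDist x y = n := by
  classical
  rw [hammingDist]
  rw [Finset.card_filter_add_card_filter_not (p := fun l => x l = y l)]
  simp

lemma cover_bound {ι β : Type*} [DecidableEq β] (U : Finset ι) (hU : U.Nonempty)
    (S : ι → Finset β) (T : Finset β) (hT : ∀ x ∈ T, ∃ v ∈ U, x ∈ S v) :
    ∃ v ∈ U, T.card ≤ U.card * (S v).card := by
  classical
  have hsub : T ⊆ U.biUnion S := fun x hx => Finset.mem_biUnion.2 (hT x hx)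
  have h1 : T.card ≤ ∑ v ∈ U, (S v).card :=
    le_trans (Finset.card_le_card hsub) (Finset.card_biUnion_le)
  have h2 : ∑ _v ∈ U, T.card ≤ ∑ v ∈ U, U.card * (S v).card := by
    rw [Finset.sum_const, smul_eq_mul]
    calc U.card * T.card ≤ U.card * ∑ v ∈ U, (S v).card :=
          Nat.mul_le_mul_left _ h1
      _ = ∑ v ∈ U, U.card * (S v).card := Finset.mul_sum _ _ _
  exact Finset.exists_le_of_sum_le hU h2

lemma mono_ineq (n d s₁ s₂ : ℕ) (h1 : 1 ≤ s₂) (h12 : s₂ ≤ s₁) (hd : d ≤ n)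
    (h : n * (s₁ - 1) < s₁ * d) : n * (s₂ - 1) < s₂ * d := by
  obtain ⟨c, hc⟩ := Nat.le.dest hd
  obtain ⟨k, hk⟩ := Nat.le.dest h12
  obtain ⟨m, hm⟩ := Nat.le.dest h1
  subst hc; subst hk; subst hm
  have e1 : 1 + m + k - 1 = m + k := by omega
  have e2 : 1 + m - 1 = m := by omega
  rw [e1] at h; rw [e2]
  nlinarith

/-- Core contradiction lemma. -/
lemma core {q n t M₁ M₂ : ℕ} (ht : 1 ≤ t)
    (C : Fin M₁ × Fin M₂ → Fin n → Fin q)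
    (U : Finset (Fin M₁ × Fin M₂)) (hUne : U.Nonempty) (hUcard : U.card ≤ t)
    (y : Fin n → Fin q) (hy : ∀ l, ∃ u ∈ U, y l = C u l)
    (u' : Fin M₁ × Fin M₂)
    (hmin : ∀ v, hammingDist (C u') y ≤ hammingDist (C v) y)
    (hfar : ∀ v ∈ U, n * (t ^ 2 - 1) < t ^ 2 * hammingDist (C u') (C v)) : False := by
  classical
  set A : (Fin M₁ × Fin M₂) → Finset (Fin n) := fun v => {l | y l = C v l} with hA
  -- step 1: some v₀ ∈ U agrees with y on many coords
  obtain ⟨v₀, hv₀U, hv₀⟩ := cover_bound U hUne A Finset.univ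
    (fun l _ => by obtain ⟨u, hu, he⟩ := hy l; exact ⟨u, hu, by simp [hA, he]⟩)
  simp only [Finset.card_univ, Fintype.card_fin] at hv₀
  have hv₀' : n ≤ t * (A v₀).card :=
    le_trans hv₀ (Nat.mul_le_mul_right _ hUcard)
  have e0 : (A v₀).card + hammingDist (C v₀) y = n := by
    simpa [hA, eq_comm] using agree_add_dist (C v₀) y
  -- u' is close to y
  have hclose : t * hammingDist (C u') y + n ≤ t * n := by
    have := hmin v₀
    nlinarith
  -- agreement of u' with y is large
  have e1 : #{l | C u' l = y l} + hammingDist (C u') y = n := agree_add_dist (C u') y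
  have ha : n ≤ t * #{l | C u' l = y l} := by nlinarith
  -- step 2: agreement coords of u' are covered by B v
  set B : (Fin M₁ × Fin M₂) → Finset (Fin n) := fun v => {l | C u' l = C v l} with hB
  obtain ⟨v₁, hv₁U, hv₁⟩ := cover_bound U hUne B {l | C u' l = y l}
    (fun l hl => by
      obtain ⟨u, hu, he⟩ := hy l
      simp only [Finset.mem_filter, Finset.mem_univ, true_and] at hl
      exact ⟨u, hu, by simp [hB, hl.trans he]⟩)
  have hv₁' : #{l | C u' l = y l} ≤ t * (B v₁).card :=
    le_trans hv₁ (Nat.mul_le_mul_right _ hUcard)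
  have e2 : (B v₁).card + hammingDist (C u') (C v₁) = n := agree_add_dist (C u') (C v₁)
  have hfin : n * (t ^ 2 - 1) + n = t ^ 2 * n := by
    have ht2 : 1 ≤ t ^ 2 := Nat.one_le_pow _ _ ht
    have : n * (t ^ 2 - 1) + n * 1 = n * (t ^ 2 - 1 + 1) := (Nat.mul_add _ _ _).symm
    rw [Nat.sub_add_cancel ht2] at this
    simpa [Nat.mul_comm] using this
  have hkey : n ≤ t ^ 2 * (B v₁).card := by
    calc n ≤ t * #{l | C u' l = y l} := ha
      _ ≤ t * (t * (B v₁).card) := Nat.mul_le_mul_left _ hv₁'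
      _ = t ^ 2 * (B v₁).card := by ring
  have := hfar v₁ hv₁U
  nlinarith

/-- A two-level code with `d₁(C) > n(1 − 1/t₁²)` and `d₂(C) > n(1 − 1/t₂²)`
(the inequalities expressed over ℕ) is `(t₁,t₂)`-TA under minimum-distance decoding:
(a) for coalitions of size at most `t₂`, every distance minimizer is a coalition member;
(b) for coalitions of size at most `t₁`, every distance minimizer has its group index
among the groups of the coalition. -/
theorem stmt3 (q n t₁ t₂ M₁ M₂ : ℕ) (hq : 2 ≤ q) (hn : 1 ≤ n)
    (ht₂ : 1 ≤ t₂) (ht : t₂ < t₁)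
    (C : Fin M₁ × Fin M₂ → Fin n → Fin q)
    (hd1 : ∀ u v : Fin M₁ × Fin M₂, u.1 ≠ v.1 →
      n * (t₁ ^ 2 - 1) < t₁ ^ 2 * hammingDist (C u) (C v))
    (hd2 : ∀ u v : Fin M₁ × Fin M₂, u.2 ≠ v.2 →
      n * (t₂ ^ 2 - 1) < t₂ ^ 2 * hammingDist (C u) (C v)) :
    (∀ U : Finset (Fin M₁ × Fin M₂), U.Nonempty → U.card ≤ t₂ →
      ∀ y : Fin n → Fin q, (∀ l, ∃ u ∈ U, y l = C u l) →
      ∀ u' : Fin M₁ × Fin M₂,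
        (∀ v, hammingDist (C u') y ≤ hammingDist (C v) y) → u' ∈ U) ∧
    (∀ U : Finset (Fin M₁ × Fin M₂), U.Nonempty → U.card ≤ t₁ →
      ∀ y : Fin n → Fin q, (∀ l, ∃ u ∈ U, y l = C u l) →
      ∀ u' : Fin M₁ × Fin M₂,
        (∀ v, hammingDist (C u') y ≤ hammingDist (C v) y) →
        u'.1 ∈ U.image Prod.fst) := by
  have hdist_le : ∀ u v : Fin M₁ × Fin M₂, hammingDist (C u) (C v) ≤ n := by
    intro u v
    calc hammingDist (C u) (C v) ≤ Fintype.card (Fin n) := (Finset.card_filter_le _ _)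
      _ = n := Fintype.card_fin n
  constructor
  · intro U hUne hUcard y hy u' hmin
    by_contra hmem
    refine core ht₂ C U hUne hUcard y hy u' hmin ?_
    intro v hv
    have hne : u' ≠ v := fun e => hmem (e ▸ hv)
    rcases Prod.mk.injEq u'.1 u'.2 v.1 v.2 ▸ (fun h => hne (Prod.ext h.1 h.2) : ¬(u'.1 = v.1 ∧ u'.2 = v.2)) with _
    by_cases h2 : u'.2 = v.2
    · have h1 : u'.1 ≠ v.1 := fun h => hne (Prod.ext h h2)
      exact mono_ineq n _ (t₁ ^ 2) (t₂ ^ 2) (Nat.one_le_pow _ _ ht₂)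
        (Nat.pow_le_pow_left ht.le 2) (hdist_le u' v) (hd1 u' v h1)
    · exact hd2 u' v h2
  · intro U hUne hUcard y hy u' hmin
    by_contra hmem
    refine core (le_trans ht₂ ht.le) C U hUne hUcard y hy u' hmin ?_
    intro v hv
    have h1 : u'.1 ≠ v.1 := fun h => hmem (Finset.mem_image.2 ⟨v, hv, h.symm⟩)
    exact hd1 u' v h1
end
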